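/- Let m = 2n and let η = (η_1,...,η_m) be a uniformly random permutation of a vector consisting of n entries equal to +1 and n entries equal to −1. Let ε = (ε_1,...,ε_m) be i.i.d. uniform ±1 signs, and define t(ε) to be a uniformly random element of the set T(ε) of vectors in S_m = {v ∈ {−1,+1}^m : Σ v_i = 0} closest to ε in Hamming distance. Then t(ε) has the same distribution as η, i.e., t(ε) is uniformly distributed on S_m. -/

import Mathlib

open Finset
open scoped Classical

/-- Sign vectors on `Fin m` with exactly `n` coordinates equal to `+1`
(encoded as `true`). -/
noncomputable def balanced (m n : ℕ) : Finset (Fin m → Bool) :=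
  Finset.univ.filter fun v => (Finset.univ.filter fun i => v i = true).card = n

/-- Hamming distance between two sign vectors. -/
def hamm {m : ℕ} (v w : Fin m → Bool) : ℕ :=
  (Finset.univ.filter fun i => v i ≠ w i).card

/-- `Tset m n v`: the balanced sign vectors at minimal Hamming distance
from `v`. -/
noncomputable def Tset (m n : ℕ) (v : Fin m → Bool) : Finset (Fin m → Bool) :=
  (balanced m n).filter fun w => ∀ w' ∈ balanced m n, hamm v w ≤ hamm v w'

lemma balanced_nonempty (m n : ℕ) (hnm : n ≤ m) : (balanced m n).Nonempty := by
  obtain ⟨s, hs, hcard⟩ := Finset.exists_subset_card_eq (s := (Finset.univ : Finset (Fin m)))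
    (by simpa using hnm)
  refine ⟨fun i => decide (i ∈ s), ?_⟩
  simp only [balanced, mem_filter, mem_univ, true_and]
  rw [← hcard]
  congr 1
  ext i
  simp

lemma tset_nonempty (m n : ℕ) (hnm : n ≤ m) (v : Fin m → Bool) :
    (Tset m n v).Nonempty := by
  obtain ⟨w, hw, hmin⟩ := Finset.exists_min_image (balanced m n) (hamm v)
    (balanced_nonempty m n hnm)
  exact ⟨w, by simp only [Tset, mem_filter]; exact ⟨hw, hmin⟩⟩

lemma tset_subset (m n : ℕ) (v : Fin m → Bool) : Tset m n v ⊆ balanced m n :=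
  Finset.filter_subset _ _

lemma card_filter_comp {m : ℕ} (σ : Equiv.Perm (Fin m)) (p : Fin m → Prop)
    [DecidablePred p] [DecidablePred fun i => p (σ i)] :
    (Finset.univ.filter fun i => p (σ i)).card = (Finset.univ.filter p).card := by
  apply Finset.card_bij (fun i _ => σ i)
  · intro a ha; simp only [mem_filter, mem_univ, true_and] at ha ⊢; exact ha
  · intro a _ b _ h; exact σ.injective h
  · intro b hb
    refine ⟨σ.symm b, ?_, by simp⟩
    simp only [mem_filter, mem_univ, true_and] at hb ⊢
    simpa using hb

lemma balanced_comp {m n : ℕ} (σ : Equiv.Perm (Fin m)) (w : Fin m → Bool) :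
    (w ∘ σ) ∈ balanced m n ↔ w ∈ balanced m n := by
  simp only [balanced, mem_filter, mem_univ, true_and, Function.comp]
  rw [card_filter_comp σ (fun i => w i = true)]

lemma hamm_comp {m : ℕ} (σ : Equiv.Perm (Fin m)) (v w : Fin m → Bool) :
    hamm (v ∘ σ) (w ∘ σ) = hamm v w := by
  simp only [hamm, Function.comp]
  exact card_filter_comp σ (fun i => v i ≠ w i)

lemma tset_comp {m n : ℕ} (σ : Equiv.Perm (Fin m)) (v w : Fin m → Bool) :
    (w ∘ σ) ∈ Tset m n (v ∘ σ) ↔ w ∈ Tset m n v := by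
  simp only [Tset, mem_filter]
  constructor
  · rintro ⟨hb, hmin⟩
    refine ⟨(balanced_comp σ w).mp hb, fun w' hw' => ?_⟩
    have := hmin (w' ∘ σ) ((balanced_comp σ w').mpr hw')
    rwa [hamm_comp, hamm_comp] at this
  · rintro ⟨hb, hmin⟩
    refine ⟨(balanced_comp σ w).mpr hb, fun w' hw' => ?_⟩
    rw [hamm_comp]
    have h2 : (w' ∘ σ.symm) ∘ σ = w' := by ext i; simp
    calc hamm v w ≤ hamm v (w' ∘ σ.symm) :=
          hmin _ (by rw [← h2] at hw'; exact (balanced_comp σ _).mp hw')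
      _ = hamm (v ∘ σ) w' := by rw [← hamm_comp σ v (w' ∘ σ.symm), h2]

lemma tset_card_comp {m n : ℕ} (σ : Equiv.Perm (Fin m)) (v : Fin m → Bool) :
    (Tset m n (v ∘ σ)).card = (Tset m n v).card := by
  apply Finset.card_bij (fun w _ => w ∘ σ.symm)
  · intro w hw
    have h2 : (w ∘ σ.symm) ∘ σ = w := by ext i; simp
    rw [← tset_comp σ v (w ∘ σ.symm), h2]; exact hw
  · intro a _ b _ h
    have h3 : ∀ i, a (σ.symm i) = b (σ.symm i) := fun i => congrFun h i
    ext i; simpa using h3 (σ i)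
  · intro w hw
    exact ⟨w ∘ σ, (tset_comp σ v w).mpr hw, by ext i; simp⟩

lemma card_balanced (m n : ℕ) : (balanced m n).card = m.choose n := by
  have h : m.choose n = ((Finset.univ : Finset (Fin m)).powersetCard n).card := by
    simp [Finset.card_powersetCard]
  rw [h]
  apply Finset.card_bij (fun v _ => Finset.univ.filter fun i => v i = true)
  · intro v hv
    simp only [balanced, mem_filter, mem_univ, true_and] at hv
    simp [Finset.mem_powersetCard, hv]
  · intro a ha b hb hab
    ext i
    have : (i ∈ Finset.univ.filter fun j => a j = true) ↔
        (i ∈ Finset.univ.filter fun j => b j = true) := by rw [hab]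
    simp only [mem_filter, mem_univ, true_and] at this
    cases ha' : a i <;> cases hb' : b i <;> simp_all
  · intro S hS
    simp only [Finset.mem_powersetCard] at hS
    refine ⟨fun i => decide (i ∈ S), ?_, ?_⟩
    · simp only [balanced, mem_filter, mem_univ, true_and]
      rw [← hS.2]; congr 1; ext i; simp
    · ext i; simp

lemma exists_perm {m n : ℕ} (e e' : Fin m → Bool)
    (he : (Finset.univ.filter fun i => e i = true).card = n)
    (he' : (Finset.univ.filter fun i => e' i = true).card = n) :
    ∃ σ : Equiv.Perm (Fin m), ∀ i, e (σ i) = e' i := by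
  have hct : Fintype.card {i // e' i = true} = Fintype.card {i // e i = true} := by
    rw [Fintype.card_subtype, Fintype.card_subtype, he, he']
  have hcf : Fintype.card {i // ¬ (e' i = true)} = Fintype.card {i // ¬ (e i = true)} := by
    rw [Fintype.card_subtype_compl, Fintype.card_subtype_compl, hct]
  let t : {i // e' i = true} ≃ {i // e i = true} := Fintype.equivOfCardEq hct
  let f : {i // ¬ (e' i = true)} ≃ {i // ¬ (e i = true)} := Fintype.equivOfCardEq hcf
  refine ⟨(Equiv.sumCompl (fun i => e' i = true)).symm.trans
    ((Equiv.sumCongr t f).trans (Equiv.sumCompl (fun i => e i = true))), fun i => ?_⟩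
  simp only [Equiv.trans_apply, Equiv.sumCongr_apply]
  by_cases h : e' i = true
  · rw [Equiv.sumCompl_symm_apply_of_pos (p := fun i => e' i = true) (a := i) h, Sum.map_inl, Equiv.sumCompl_apply_inl]
    rw [(t ⟨i, h⟩).2, h]
  · rw [Equiv.sumCompl_symm_apply_of_neg (p := fun i => e' i = true) (a := i) h, Sum.map_inr, Equiv.sumCompl_apply_inr]
    have h2 := (f ⟨i, h⟩).2
    simp only [Bool.not_eq_true] at h2 h
    rw [h2, h]

/-- Coupling lemma: if `ε` is a uniform sign vector and `t(ε)` is chosen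
uniformly from `Tset m n ε`, then `t(ε)` is uniformly distributed on the set
of balanced sign vectors: for every balanced `e`,
`P(t(ε) = e) = 1 / C(m,n)`. -/
theorem coupling_uniform (n : ℕ) (hn : 0 < n) (m : ℕ) (hm : m = 2 * n)
    (e : Fin m → Bool) (he : e ∈ balanced m n) :
    (∑ ε : Fin m → Bool,
        if e ∈ Tset m n ε then (1 : ℝ) / (Tset m n ε).card else 0) / 2 ^ m
      = 1 / (m.choose n : ℝ) := by
  have hnm : n ≤ m := by omega
  set F : (Fin m → Bool) → ℝ := fun e' =>
    ∑ ε : Fin m → Bool, if e' ∈ Tset m n ε then (1 : ℝ) / (Tset m n ε).card else 0 with hF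
  -- symmetry
  have hsym : ∀ e' ∈ balanced m n, F e' = F e := by
    intro e' he'
    simp only [balanced, mem_filter, mem_univ, true_and] at he he'
    obtain ⟨σ, hσ⟩ := exists_perm e e' he he'
    have heσ : e ∘ σ = e' := funext hσ
    have := Fintype.sum_equiv (Equiv.arrowCongr σ.symm (Equiv.refl Bool))
      (fun v => if e ∈ Tset m n v then (1 : ℝ) / (Tset m n v).card else 0)
      (fun v => if e' ∈ Tset m n v then (1 : ℝ) / (Tset m n v).card else 0)
      (fun v => by
        have harr : (Equiv.arrowCongr σ.symm (Equiv.refl Bool)) v = v ∘ σ := by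
          ext i; simp [Equiv.arrowCongr]
        simp only [harr, ← heσ, tset_comp, tset_card_comp])
    simpa [hF] using this.symm
  -- total
  have htotal : ∑ e' ∈ balanced m n, F e' = (2 : ℝ) ^ m := by
    simp only [hF]
    rw [Finset.sum_comm]
    have : ∀ ε : Fin m → Bool,
        (∑ e' ∈ balanced m n, if e' ∈ Tset m n ε then (1 : ℝ) / (Tset m n ε).card else 0)
          = 1 := by
      intro ε
      rw [Finset.sum_ite_mem, Finset.inter_eq_right.mpr (tset_subset m n ε),
        Finset.sum_const, nsmul_eq_mul]
      have hpos : (0 : ℝ) < (Tset m n ε).card := by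
        exact_mod_cast Finset.card_pos.mpr (tset_nonempty m n hnm ε)
      field_simp
    rw [Finset.sum_congr rfl fun ε _ => this ε, Finset.sum_const, nsmul_eq_mul, mul_one]
    simp [Finset.card_univ]
  have htotal2 : ∑ e' ∈ balanced m n, F e' = (m.choose n : ℝ) * F e := by
    rw [Finset.sum_congr rfl hsym, Finset.sum_const, nsmul_eq_mul, card_balanced]
  have hchoose : (0 : ℝ) < (m.choose n : ℝ) := by
    exact_mod_cast Nat.choose_pos hnm
  have hFe : F e = 2 ^ m / (m.choose n : ℝ) := by
    rw [htotal2] at htotal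
    field_simp at htotal ⊢
    linarith
  have hFe' : (∑ ε : Fin m → Bool,
      if e ∈ Tset m n ε then (1 : ℝ) / (Tset m n ε).card else 0)
        = 2 ^ m / (m.choose n : ℝ) := hFe
  rw [hFe', div_div, mul_comm, ← div_div,
    div_self (by positivity : (2:ℝ)^m ≠ 0), one_div]
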